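/- Every positive self-adjoint operator A on a quaternionic Hilbert space has spherical spectrum contained in [0, +∞). -/

import Mathlib

noncomputable section

notation "ℍ" => Quaternion ℝ

open MeasureTheory Filter

/-- Borel σ-algebra on the quaternions. -/
instance : MeasurableSpace ℍ := borel ℍ

instance : BorelSpace ℍ := ⟨rfl⟩

/-- A quaternionic (right) Hilbert space structure on a normed additive group `H`:
a right scalar multiplication by quaternions together with an ℍ-valued Hermitian
scalar product compatible with the norm.  (Completeness of `H` is assumed
separately via `[CompleteSpace H]`.) -/
structure QHS (H : Type) [NormedAddCommGroup H] where
  smul : H → ℍ → H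
  inn : H → H → ℍ
  add_smul' : ∀ (u v : H) (q : ℍ), smul (u + v) q = smul u q + smul v q
  smul_add' : ∀ (u : H) (p q : ℍ), smul u (p + q) = smul u p + smul u q
  smul_mul' : ∀ (u : H) (p q : ℍ), smul u (p * q) = smul (smul u p) q
  smul_one' : ∀ u : H, smul u 1 = u
  inn_add_right : ∀ u v w : H, inn u (v + w) = inn u v + inn u w
  inn_smul_right : ∀ (u v : H) (q : ℍ), inn u (smul v q) = inn u v * q
  inn_conj : ∀ u v : H, inn u v = star (inn v u)
  inn_self_real : ∀ u : H, inn u u = (((inn u u).re : ℝ) : ℍ)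
  norm_sq' : ∀ u : H, ‖u‖ ^ 2 = (inn u u).re

variable {H : Type} [NormedAddCommGroup H]

/-- The graph of an operator `T` with domain `D`. -/
def graphOf (T : H → H) (D : Set H) : Set (H × H) := {p | p.1 ∈ D ∧ p.2 = T p.1}

/-- Domain of a graph. -/
def graphDom (G : Set (H × H)) : Set H := {u | ∃ w, (u, w) ∈ G}

/-- A function extracted from a graph (by choice). -/
def graphFun (G : Set (H × H)) : H → H := fun u =>
  letI : Nonempty H := ⟨0⟩
  Classical.epsilon fun w => (u, w) ∈ G

/-- Boundedness of an everywhere defined operator. -/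
def BoundedOp (T : H → H) : Prop := ∃ C : ℝ, ∀ u : H, ‖T u‖ ≤ C * ‖u‖

/-- The operator norm. -/
def opNorm (T : H → H) : ℝ := sInf {C : ℝ | 0 ≤ C ∧ ∀ u : H, ‖T u‖ ≤ C * ‖u‖}

/-- Closed operator: the graph is closed. -/
def ClosedOp (T : H → H) (D : Set H) : Prop := IsClosed (graphOf T D)

/-- The domain `D(T²)`. -/
def D2 (T : H → H) (D : Set H) : Set H := {u ∈ D | T u ∈ D}

/-- The slice complex plane `ℂ_ι = {a + ι b}` determined by an imaginary unit `ι`. -/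
def Cslice (ι : ℍ) : Set ℍ :=
  {x : ℍ | ∃ a b : ℝ, x = ((a : ℝ) : ℍ) + ι * ((b : ℝ) : ℍ)}

/-- The closed upper half slice plane `ℂ_ι⁺ = {a + ι b : b ≥ 0}`. -/
def Cplus (ι : ℍ) : Set ℍ :=
  {x : ℍ | ∃ a b : ℝ, 0 ≤ b ∧ x = ((a : ℝ) : ℍ) + ι * ((b : ℝ) : ℍ)}

namespace QHS

variable (𝒮 : QHS H)

/-- Right ℍ-linearity of an everywhere defined map. -/
def RightLinear (T : H → H) : Prop :=
  (∀ u v : H, T (u + v) = T u + T v) ∧ ∀ (u : H) (q : ℍ), T (𝒮.smul u q) = 𝒮.smul (T u) q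

/-- A (right ℍ-linear) subspace. -/
def IsSubspace (D : Set H) : Prop :=
  (0 : H) ∈ D ∧ (∀ u ∈ D, ∀ v ∈ D, u + v ∈ D) ∧ ∀ u ∈ D, ∀ q : ℍ, 𝒮.smul u q ∈ D

/-- Right ℍ-linearity on a domain `D`. -/
def RightLinearOn (T : H → H) (D : Set H) : Prop :=
  (∀ u ∈ D, ∀ v ∈ D, T (u + v) = T u + T v) ∧
    ∀ u ∈ D, ∀ q : ℍ, T (𝒮.smul u q) = 𝒮.smul (T u) q

/-- `S` is the adjoint of `T` (both everywhere defined):  `⟨S u|v⟩ = ⟨u|T v⟩`. -/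
def AdjointPair (T S : H → H) : Prop := ∀ u v : H, 𝒮.inn (S u) v = 𝒮.inn u (T v)

def SelfAdjointOp (T : H → H) : Prop := ∀ u v : H, 𝒮.inn (T u) v = 𝒮.inn u (T v)

def AntiSelfAdjointOp (T : H → H) : Prop := ∀ u v : H, 𝒮.inn (T u) v = -𝒮.inn u (T v)

/-- Positivity: `⟨u|T u⟩` is real and non-negative. -/
def PositiveOp (T : H → H) : Prop :=
  ∀ u : H, 𝒮.inn u (T u) = ((((𝒮.inn u (T u)).re : ℝ)) : ℍ) ∧ 0 ≤ (𝒮.inn u (T u)).re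

/-- Positivity on a domain. -/
def PositiveOn (T : H → H) (D : Set H) : Prop :=
  ∀ u ∈ D, 𝒮.inn u (T u) = ((((𝒮.inn u (T u)).re : ℝ)) : ℍ) ∧ 0 ≤ (𝒮.inn u (T u)).re

/-- Unitarity: right linear, surjective, inner-product preserving. -/
def UnitaryOp (T : H → H) : Prop :=
  𝒮.RightLinear T ∧ Function.Surjective T ∧ ∀ u v : H, 𝒮.inn (T u) (T v) = 𝒮.inn u v

/-- The domain of the adjoint of `T : D → H`. -/
def adjDom (T : H → H) (D : Set H) : Set H :=
  {u : H | ∃ w : H, ∀ v ∈ D, 𝒮.inn w v = 𝒮.inn u (T v)}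

/-- The adjoint operator of `T : D → H` (defined by choice; it is the genuine
adjoint when `D` is dense). -/
def adjOp (T : H → H) (D : Set H) : H → H := fun u =>
  letI := Classical.propDecidable
  if h : ∃ w : H, ∀ v ∈ D, 𝒮.inn w v = 𝒮.inn u (T v) then h.choose else 0

/-- Self-adjointness of an unbounded operator: `T* = T` (same domain, same values). -/
def SelfAdjointUnb (T : H → H) (D : Set H) : Prop :=
  𝒮.adjDom T D = D ∧ ∀ u ∈ D, 𝒮.adjOp T D u = T u

/-- Normality of an unbounded operator: `T T* = T* T`. -/
def NormalUnb (T : H → H) (D : Set H) : Prop :=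
  ({u ∈ D | T u ∈ 𝒮.adjDom T D} = {u ∈ 𝒮.adjDom T D | 𝒮.adjOp T D u ∈ D}) ∧
    ∀ u ∈ D, T u ∈ 𝒮.adjDom T D → 𝒮.adjOp T D (T u) = T (𝒮.adjOp T D u)

/-- The positive square root of a positive bounded operator (by choice). -/
def posSqrt (T : H → H) : H → H :=
  letI : Nonempty (H → H) := ⟨id⟩
  Classical.epsilon fun R : H → H =>
    𝒮.RightLinear R ∧ BoundedOp R ∧ 𝒮.PositiveOp R ∧ 𝒮.SelfAdjointOp R ∧
      ∀ u : H, R (R u) = T u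

/-- The operator `Δ_q(T) = T² - T (2 Re q) + |q|² 1`. -/
def Delta (T : H → H) (q : ℍ) : H → H := fun u =>
  T (T u) - 𝒮.smul (T u) (((2 * q.re : ℝ)) : ℍ) + 𝒮.smul u (((‖q‖ ^ 2 : ℝ)) : ℍ)

/-- Membership in the spherical resolvent set: `Δ_q(T)` is injective with dense range
and bounded inverse. -/
def InSphResolvent (T : H → H) (D : Set H) (q : ℍ) : Prop :=
  (∀ u ∈ D2 T D, 𝒮.Delta T q u = 0 → u = 0) ∧
    Dense (𝒮.Delta T q '' D2 T D) ∧
    ∃ C : ℝ, ∀ u ∈ D2 T D, ‖u‖ ≤ C * ‖𝒮.Delta T q u‖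

/-- The spherical spectrum. -/
def sphSpectrum (T : H → H) (D : Set H) : Set ℍ := {q | ¬𝒮.InSphResolvent T D q}

/-- The spherical point spectrum. -/
def sphPointSpectrum (T : H → H) (D : Set H) : Set ℍ :=
  {q | ∃ u ∈ D2 T D, u ≠ 0 ∧ 𝒮.Delta T q u = 0}

/-- The spherical residual spectrum. -/
def sphResidualSpectrum (T : H → H) (D : Set H) : Set ℍ :=
  {q | (∀ u ∈ D2 T D, 𝒮.Delta T q u = 0 → u = 0) ∧
    ¬Dense (𝒮.Delta T q '' D2 T D)}

/-- The spherical continuous spectrum. -/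
def sphContinuousSpectrum (T : H → H) (D : Set H) : Set ℍ :=
  {q | (∀ u ∈ D2 T D, 𝒮.Delta T q u = 0 → u = 0) ∧
    Dense (𝒮.Delta T q '' D2 T D) ∧
    ¬∃ C : ℝ, ∀ u ∈ D2 T D, ‖u‖ ≤ C * ‖𝒮.Delta T q u‖}

/-- A Hilbert basis of a quaternionic Hilbert space. -/
def IsHilbertBasis (N : Set H) : Prop :=
  (∀ z ∈ N, ‖z‖ = 1) ∧ (∀ z ∈ N, ∀ w ∈ N, z ≠ w → 𝒮.inn z w = 0) ∧
    ∀ u : H, (∀ z ∈ N, 𝒮.inn z u = 0) → u = 0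

/-- `L` is the left scalar multiplication induced by the Hilbert basis `N`:
`L_q u = Σ_{z ∈ N} z q ⟨z|u⟩`. -/
def IsInducedLSM (N : Set H) (L : ℍ → H → H) : Prop :=
  ∀ (q : ℍ) (u : H),
    HasSum (fun z : N => 𝒮.smul (z : H) (q * 𝒮.inn (z : H) u)) (L q u)

/-- `L` is a left scalar multiplication of `H` (induced by some Hilbert basis). -/
def IsLSM (L : ℍ → H → H) : Prop :=
  ∃ N : Set H, 𝒮.IsHilbertBasis N ∧ 𝒮.IsInducedLSM N L

/-- The orthogonal complement of a subset. -/
def orthC (S : Set H) : Set H := {u : H | ∀ v ∈ S, 𝒮.inn u v = 0}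

/-- The complex subspace `H₊^{Jι} = {u : J u = u ι}`. -/
def Hplus (J : H → H) (ι : ℍ) : Set H := {u : H | J u = 𝒮.smul u ι}

/-- The complex subspace `H₋^{Jι} = {u : J u = -u ι}`. -/
def Hminus (J : H → H) (ι : ℍ) : Set H := {u : H | J u = -𝒮.smul u ι}

end QHS

/-- A quaternionic projection valued measure (qPVM) over `ℂ_ι⁺` in `H`. -/
structure IsQPVM (𝒮 : QHS H) (ι : ℍ) (P : Set ℍ → H → H) : Prop where
  proj_linear : ∀ E : Set ℍ, MeasurableSet E → E ⊆ Cplus ι → 𝒮.RightLinear (P E)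
  proj_bounded : ∀ E : Set ℍ, MeasurableSet E → E ⊆ Cplus ι → BoundedOp (P E)
  proj_idem : ∀ E : Set ℍ, MeasurableSet E → E ⊆ Cplus ι → ∀ u, P E (P E u) = P E u
  proj_sa : ∀ E : Set ℍ, MeasurableSet E → E ⊆ Cplus ι → 𝒮.SelfAdjointOp (P E)
  proj_pos : ∀ E : Set ℍ, MeasurableSet E → E ⊆ Cplus ι → 𝒮.PositiveOp (P E)
  total : ∀ u : H, P (Cplus ι) u = u
  inter : ∀ E F : Set ℍ, MeasurableSet E → E ⊆ Cplus ι → MeasurableSet F → F ⊆ Cplus ι →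
    ∀ u, P (E ∩ F) u = P E (P F u)
  sigma_add : ∀ E : ℕ → Set ℍ, (∀ n, MeasurableSet (E n) ∧ E n ⊆ Cplus ι) →
    (Pairwise fun n m => Disjoint (E n) (E m)) →
    ∀ u : H, HasSum (fun n => P (E n) u) (P (⋃ n, E n) u)

/-- The support of a qPVM: points of `ℂ_ι⁺` all of whose relatively open neighbourhoods
have non-zero projection. -/
def suppP (ι : ℍ) (P : Set ℍ → H → H) : Set ℍ :=
  {x ∈ Cplus ι | ∀ U : Set ℍ, IsOpen U → x ∈ U → ∃ u : H, P (U ∩ Cplus ι) u ≠ 0}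

/-- An intertwining quaternionic PVM (iqPVM): a qPVM together with a commuting left
scalar multiplication. -/
def IsIQPVM (𝒮 : QHS H) (ι : ℍ) (P : Set ℍ → H → H) (L : ℍ → H → H) : Prop :=
  IsQPVM 𝒮 ι P ∧ 𝒮.IsLSM L ∧
    ∀ E : Set ℍ, MeasurableSet E → E ⊆ Cplus ι →
      ∀ (q : ℍ) (u : H), P E (L q u) = L q (P E u)

/-- Data of a simple function: coefficients and pairwise disjoint Borel subsets of `ℂ_ι⁺`. -/
def IsSimpleData (ι : ℍ) {n : ℕ} (c : Fin n → ℍ) (E : Fin n → Set ℍ) : Prop :=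
  (∀ ℓ, MeasurableSet (E ℓ) ∧ E ℓ ⊆ Cplus ι) ∧
    Pairwise fun ℓ ℓ' => Disjoint (E ℓ) (E ℓ')

/-- `S = ∫ φ d𝒫`, characterized by uniform approximation (on the support of `P`)
by simple functions together with approximation of `S` by the corresponding
elementary integrals `Σ_ℓ L_{c_ℓ} P(E_ℓ)`. -/
def IsBoundedIntegral (𝒮 : QHS H) (ι : ℍ) (P : Set ℍ → H → H) (L : ℍ → H → H)
    (φ : ℍ → ℍ) (S : H → H) : Prop :=
  ∀ ε : ℝ, 0 < ε → ∃ (n : ℕ) (c : Fin n → ℍ) (E : Fin n → Set ℍ),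
    IsSimpleData ι c E ∧
    (∀ x ∈ suppP ι P, ‖φ x - ∑ ℓ, Set.indicator (E ℓ) (fun _ => c ℓ) x‖ ≤ ε) ∧
    ∀ u : H, ‖S u - ∑ ℓ, L (c ℓ) (P (E ℓ) u)‖ ≤ ε * ‖u‖

/-- The integral of a bounded measurable function with respect to an iqPVM
(defined by choice from the characterizing property). -/
def bInt (𝒮 : QHS H) (ι : ℍ) (P : Set ℍ → H → H) (L : ℍ → H → H) (φ : ℍ → ℍ) : H → H :=
  letI : Nonempty (H → H) := ⟨id⟩
  Classical.epsilon fun S : H → H => IsBoundedIntegral 𝒮 ι P L φ S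

/-- The `P`-essential supremum norm `‖φ‖_∞^{(P)}`. -/
def essSupNorm (ι : ℍ) (P : Set ℍ → H → H) (φ : ℍ → ℍ) : ℝ :=
  sInf {k : ℝ | 0 ≤ k ∧ ∀ u : H, P {x ∈ Cplus ι | k < ‖φ x‖} u = 0}

/-- `μ` is the positive Borel measure `μ_u^{(P)} : E ↦ ⟨u|P(E)u⟩`. -/
def muMatches (𝒮 : QHS H) (ι : ℍ) (P : Set ℍ → H → H) (u : H) (μ : Measure ℍ) : Prop :=
  ∀ E : Set ℍ, MeasurableSet E →
    μ E = ENNReal.ofReal ((𝒮.inn u (P (E ∩ Cplus ι) u)).re)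

/-- The natural domain `D_f = {u : f ∈ L²(μ_u^{(P)})}` of `∫ f d𝒫`. -/
def Dnat (𝒮 : QHS H) (ι : ℍ) (P : Set ℍ → H → H) (f : ℍ → ℍ) : Set H :=
  {u : H | ∃ μ : Measure ℍ, muMatches 𝒮 ι P u μ ∧
    (∫⁻ x, ENNReal.ofReal (‖f x‖ ^ 2) ∂μ) < ⊤}

/-- The truncation of `f` at level `n`. -/
def trunc (f : ℍ → ℍ) (n : ℕ) : ℍ → ℍ := fun x => if ‖f x‖ ≤ (n : ℝ) then f x else 0

/-- The integral of a possibly unbounded measurable function with respect to an iqPVM: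
the strong limit of the integrals of its truncations. -/
def uInt (𝒮 : QHS H) (ι : ℍ) (P : Set ℍ → H → H) (L : ℍ → H → H) (f : ℍ → ℍ) : H → H :=
  fun u =>
    letI : Nonempty H := ⟨0⟩
    limUnder atTop fun n : ℕ => bInt 𝒮 ι P L (trunc f n) u

/-- The inverse `(1 + T*T)⁻¹` of `1 + T*T` (by choice). -/
def CT (𝒮 : QHS H) (T : H → H) (D : Set H) : H → H :=
  letI : Nonempty (H → H) := ⟨id⟩
  Classical.epsilon fun C : H → H =>
    (∀ y : H, C y ∈ D ∧ T (C y) ∈ 𝒮.adjDom T D ∧ C y + 𝒮.adjOp T D (T (C y)) = y) ∧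
      ∀ u ∈ D, T u ∈ 𝒮.adjDom T D → C (u + 𝒮.adjOp T D (T u)) = u

/-- The bounded transform `Z_T = T (1 + T*T)^{-1/2}`. -/
def ZT (𝒮 : QHS H) (T : H → H) (D : Set H) : H → H := fun u =>
  T (𝒮.posSqrt (CT 𝒮 T D) u)

end

noncomputable section Dev

variable {H : Type} [NormedAddCommGroup H]

namespace QHS

variable (𝒮 : QHS H)

lemma smul_zero_q (u : H) : 𝒮.smul u 0 = 0 := by
  have h := 𝒮.smul_add' u 0 0
  rw [add_zero] at h
  exact (left_eq_add.mp h)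

lemma zero_smul_q (q : ℍ) : 𝒮.smul 0 q = 0 := by
  have h := 𝒮.add_smul' 0 0 q
  rw [add_zero] at h
  exact (left_eq_add.mp h)

lemma smul_neg_one (u : H) : 𝒮.smul u (-1) = -u := by
  have h := 𝒮.smul_add' u 1 (-1)
  rw [add_neg_cancel, 𝒮.smul_zero_q, 𝒮.smul_one'] at h
  exact (neg_eq_of_add_eq_zero_right h.symm).symm

lemma neg_smul_q (u : H) (q : ℍ) : 𝒮.smul (-u) q = -(𝒮.smul u q) := by
  have h := 𝒮.add_smul' u (-u) q
  rw [add_neg_cancel, 𝒮.zero_smul_q] at h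
  exact (neg_eq_of_add_eq_zero_right h.symm).symm

lemma sub_smul_q (u v : H) (q : ℍ) : 𝒮.smul (u - v) q = 𝒮.smul u q - 𝒮.smul v q := by
  rw [sub_eq_add_neg, 𝒮.add_smul', 𝒮.neg_smul_q, sub_eq_add_neg]

lemma inn_zero_right' (u : H) : 𝒮.inn u 0 = 0 := by
  have h := 𝒮.inn_add_right u 0 0
  rw [add_zero] at h
  exact (left_eq_add.mp h)

lemma inn_add_left' (u v w : H) : 𝒮.inn (u + v) w = 𝒮.inn u w + 𝒮.inn v w := by
  rw [𝒮.inn_conj, 𝒮.inn_add_right, star_add, ← 𝒮.inn_conj, ← 𝒮.inn_conj]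

lemma inn_smul_left' (u v : H) (q : ℍ) : 𝒮.inn (𝒮.smul u q) v = star q * 𝒮.inn u v := by
  rw [𝒮.inn_conj, 𝒮.inn_smul_right, star_mul, ← 𝒮.inn_conj]

lemma inn_neg_right' (u v : H) : 𝒮.inn u (-v) = -𝒮.inn u v := by
  have h := 𝒮.inn_add_right u v (-v)
  rw [add_neg_cancel, 𝒮.inn_zero_right'] at h
  exact (neg_eq_of_add_eq_zero_right h.symm).symm

lemma inn_sub_right' (u v w : H) : 𝒮.inn u (v - w) = 𝒮.inn u v - 𝒮.inn u w := by
  rw [sub_eq_add_neg, 𝒮.inn_add_right, 𝒮.inn_neg_right', sub_eq_add_neg]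

lemma inn_neg_left' (u v : H) : 𝒮.inn (-u) v = -𝒮.inn u v := by
  rw [𝒮.inn_conj, 𝒮.inn_neg_right', star_neg, ← 𝒮.inn_conj]

lemma inn_sub_left' (u v w : H) : 𝒮.inn (u - v) w = 𝒮.inn u w - 𝒮.inn v w := by
  rw [sub_eq_add_neg, 𝒮.inn_add_left', 𝒮.inn_neg_left', sub_eq_add_neg]

lemma norm_smul_q (u : H) (q : ℍ) : ‖𝒮.smul u q‖ = ‖u‖ * ‖q‖ := by
  have h1 : 𝒮.inn (𝒮.smul u q) (𝒮.smul u q)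
      = star q * (((‖u‖ ^ 2 : ℝ) : ℍ) * q) := by
    rw [𝒮.inn_smul_left', 𝒮.inn_smul_right, 𝒮.inn_self_real, ← 𝒮.norm_sq']
  have hmove : star q * (((‖u‖ ^ 2 : ℝ) : ℍ) * q)
      = ((‖u‖ ^ 2 * Quaternion.normSq q : ℝ) : ℍ) := by
    calc star q * (((‖u‖ ^ 2 : ℝ) : ℍ) * q) = (star q * ((‖u‖ ^ 2 : ℝ) : ℍ)) * q :=
          (mul_assoc _ _ _).symm
      _ = (((‖u‖ ^ 2 : ℝ) : ℍ) * star q) * q := by rw [← Quaternion.coe_commutes]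
      _ = ((‖u‖ ^ 2 : ℝ) : ℍ) * (star q * q) := mul_assoc _ _ _
      _ = ((‖u‖ ^ 2 : ℝ) : ℍ) * ((Quaternion.normSq q : ℝ) : ℍ) := by
          rw [Quaternion.star_mul_self]
      _ = ((‖u‖ ^ 2 * Quaternion.normSq q : ℝ) : ℍ) := by rw [← Quaternion.coe_mul]
  have h2 : ‖𝒮.smul u q‖ ^ 2 = (‖u‖ * ‖q‖) ^ 2 := by
    rw [𝒮.norm_sq', h1, hmove, Quaternion.re_coe, Quaternion.normSq_eq_norm_mul_self]
    ring
  calc ‖𝒮.smul u q‖ = Real.sqrt (‖𝒮.smul u q‖ ^ 2) := (Real.sqrt_sq (norm_nonneg _)).symm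
    _ = Real.sqrt ((‖u‖ * ‖q‖) ^ 2) := by rw [h2]
    _ = ‖u‖ * ‖q‖ := Real.sqrt_sq (by positivity)

end QHS

/-- The real Hilbert space underlying a quaternionic Hilbert space. -/
def HAux {H : Type} [NormedAddCommGroup H] (_𝒮 : QHS H) : Type := H

variable (𝒮 : QHS H)

instance : NormedAddCommGroup (HAux 𝒮) := inferInstanceAs (NormedAddCommGroup H)

instance [CompleteSpace H] : CompleteSpace (HAux 𝒮) := inferInstanceAs (CompleteSpace H)

instance : SMul ℝ (HAux 𝒮) := ⟨fun r u => 𝒮.smul u ((r : ℝ) : ℍ)⟩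

lemma HAux.smul_def (r : ℝ) (u : HAux 𝒮) : r • u = 𝒮.smul u ((r : ℝ) : ℍ) := rfl

instance : Module ℝ (HAux 𝒮) :=
  Module.ofMinimalAxioms
    (fun r x y => 𝒮.add_smul' x y ((r : ℝ) : ℍ))
    (fun r s (x : H) => by
      show 𝒮.smul x (((r + s : ℝ)) : ℍ) = 𝒮.smul x _ + 𝒮.smul x _
      rw [Quaternion.coe_add, 𝒮.smul_add'])
    (fun r s (x : H) => by
      show 𝒮.smul x (((r * s : ℝ)) : ℍ) = 𝒮.smul (𝒮.smul x _) _
      rw [mul_comm r s, Quaternion.coe_mul, 𝒮.smul_mul'])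
    (fun (x : H) => by
      show 𝒮.smul x (((1 : ℝ)) : ℍ) = x
      rw [Quaternion.coe_one, 𝒮.smul_one'])

instance : NormedSpace ℝ (HAux 𝒮) :=
  ⟨fun r (x : H) => by
    show ‖𝒮.smul x ((r : ℝ) : ℍ)‖ ≤ ‖r‖ * ‖x‖
    rw [𝒮.norm_smul_q, Quaternion.norm_coe]
    exact le_of_eq (mul_comm _ _)⟩

instance : Inner ℝ (HAux 𝒮) := ⟨fun u v => (𝒮.inn u v).re⟩

lemma HAux.inner_def (u v : HAux 𝒮) : (inner ℝ u v : ℝ) = (𝒮.inn u v).re := rfl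

instance : InnerProductSpace ℝ (HAux 𝒮) where
  norm_sq_eq_re_inner x := 𝒮.norm_sq' x
  conj_inner_symm (x y : H) := by
    show (starRingEnd ℝ) (𝒮.inn y x).re = (𝒮.inn x y).re
    rw [𝒮.inn_conj x y]
    simp
  add_left (x y z : H) := by
    show (𝒮.inn (x + y) z).re = (𝒮.inn x z).re + (𝒮.inn y z).re
    rw [𝒮.inn_add_left']
    simp
  smul_left (x y : H) r := by
    show (𝒮.inn (𝒮.smul x ((r : ℝ) : ℍ)) y).re = (starRingEnd ℝ) r * (𝒮.inn x y).re
    rw [𝒮.inn_smul_left', Quaternion.star_coe, Quaternion.coe_mul_eq_smul]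
    simp

namespace QHS

lemma re_inn_le (u v : H) : (𝒮.inn u v).re ≤ ‖u‖ * ‖v‖ :=
  @real_inner_le_norm (HAux 𝒮) _ _ u v

lemma norm_inn_le (u v : H) : ‖𝒮.inn u v‖ ≤ ‖u‖ * ‖v‖ := by
  by_cases h : 𝒮.inn u v = 0
  · rw [h, norm_zero]; positivity
  have h1 := 𝒮.re_inn_le u (𝒮.smul v (star (𝒮.inn u v)))
  rw [𝒮.inn_smul_right, 𝒮.norm_smul_q, norm_star, Quaternion.self_mul_star,
    Quaternion.re_coe] at h1
  have h2 : ‖𝒮.inn u v‖ * ‖𝒮.inn u v‖ = Quaternion.normSq (𝒮.inn u v) :=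
    (Quaternion.normSq_eq_norm_mul_self _).symm
  have h3 : 0 < ‖𝒮.inn u v‖ := norm_pos_iff.mpr h
  nlinarith

lemma eq_zero_of_inn_dense {D : Set H} (hdense : Dense D) {y : H}
    (h : ∀ v ∈ D, 𝒮.inn y v = 0) : y = 0 := by
  let y' : HAux 𝒮 := y
  have hc : Continuous (fun v : HAux 𝒮 => (inner ℝ y' v : ℝ)) :=
    continuous_const.inner continuous_id
  have hS : IsClosed {v : HAux 𝒮 | (inner ℝ y' v : ℝ) = 0} :=
    isClosed_eq hc continuous_const
  have hsub : D ⊆ {v : HAux 𝒮 | (inner ℝ y' v : ℝ) = 0} := by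
    intro v hv
    show (𝒮.inn y v).re = 0
    rw [h v hv]; exact Quaternion.re_zero
  have hclos : closure D ⊆ {v : HAux 𝒮 | (inner ℝ y' v : ℝ) = 0} :=
    closure_minimal hsub hS
  have hmem : y' ∈ closure (D : Set (HAux 𝒮)) := by
    have h2 : closure (D : Set H) = Set.univ := hdense.closure_eq
    exact (h2 ▸ (Set.mem_univ y) : y ∈ closure (D : Set H))
  have hy : (𝒮.inn y y).re = 0 := hclos hmem
  have hn : ‖y‖ ^ 2 = 0 := by rw [𝒮.norm_sq']; exact hy
  have := pow_eq_zero_iff (n := 2) (by norm_num) |>.mp hn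
  exact norm_eq_zero.mp this

end QHS

namespace QHS

variable {A : H → H} {D : Set H}

lemma subspace_neg_mem (hD : 𝒮.IsSubspace D) {u : H} (hu : u ∈ D) : -u ∈ D := by
  have := hD.2.2 u hu (-1)
  rwa [𝒮.smul_neg_one] at this

lemma subspace_sub_mem (hD : 𝒮.IsSubspace D) {u v : H} (hu : u ∈ D) (hv : v ∈ D) :
    u - v ∈ D := by
  have := hD.2.1 u hu (-v) (𝒮.subspace_neg_mem hD hv)
  rwa [← sub_eq_add_neg] at this

lemma map_zero_of_lin (hD : 𝒮.IsSubspace D) (hlin : 𝒮.RightLinearOn A D) : A 0 = 0 := by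
  have h := hlin.1 0 hD.1 0 hD.1
  rw [add_zero] at h
  exact (left_eq_add.mp h)

lemma map_neg_of_lin (hD : 𝒮.IsSubspace D) (hlin : 𝒮.RightLinearOn A D) {u : H}
    (hu : u ∈ D) : A (-u) = -A u := by
  have h := hlin.2 u hu (-1)
  rwa [𝒮.smul_neg_one, 𝒮.smul_neg_one] at h

lemma map_sub_of_lin (hD : 𝒮.IsSubspace D) (hlin : 𝒮.RightLinearOn A D) {u v : H}
    (hu : u ∈ D) (hv : v ∈ D) : A (u - v) = A u - A v := by
  have h := hlin.1 u hu (-v) (𝒮.subspace_neg_mem hD hv)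
  rw [← sub_eq_add_neg, 𝒮.map_neg_of_lin hD hlin hv, ← sub_eq_add_neg] at h
  exact h

lemma symm_of_sa (hsa : 𝒮.SelfAdjointUnb A D) :
    ∀ u ∈ D, ∀ v ∈ D, 𝒮.inn (A u) v = 𝒮.inn u (A v) := by
  intro u hu v hv
  have hex : ∃ w, ∀ v ∈ D, 𝒮.inn w v = 𝒮.inn u (A v) := by
    have : u ∈ 𝒮.adjDom A D := by rw [hsa.1]; exact hu
    exact this
  have hval : 𝒮.adjOp A D u = A u := hsa.2 u hu
  have hch : 𝒮.adjOp A D u = hex.choose := by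
    unfold QHS.adjOp
    exact dif_pos hex
  rw [← hval, hch]
  exact hex.choose_spec v hv

lemma max_of_sa (hsa : 𝒮.SelfAdjointUnb A D) (hdense : Dense D) {x z : H}
    (h : ∀ v ∈ D, 𝒮.inn z v = 𝒮.inn x (A v)) : x ∈ D ∧ A x = z := by
  have hx : x ∈ D := by
    rw [← hsa.1]; exact ⟨z, h⟩
  refine ⟨hx, ?_⟩
  have h0 : ∀ v ∈ D, 𝒮.inn (A x - z) v = 0 := by
    intro v hv
    rw [𝒮.inn_sub_left', 𝒮.symm_of_sa hsa x hx v hv, h v hv, sub_self]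
  exact sub_eq_zero.mp (𝒮.eq_zero_of_inn_dense hdense h0)

/-- The shifted and scaled operator `u ↦ t (A u - a u)`. -/
def ShT (𝒮 : QHS H) (A : H → H) (a t : ℝ) : H → H := fun u =>
  𝒮.smul (A u - 𝒮.smul u ((a : ℝ) : ℍ)) ((t : ℝ) : ℍ)

variable {a t : ℝ}

lemma ShT_mem (hD : 𝒮.IsSubspace D) {u : H} (hu : u ∈ D) (hAu : A u ∈ D) :
    𝒮.ShT A a t u ∈ D :=
  hD.2.2 _ (𝒮.subspace_sub_mem hD hAu (hD.2.2 u hu _)) _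

lemma mem_of_ShT_mem (hD : 𝒮.IsSubspace D) (ht : t ≠ 0) {u : H} (hu : u ∈ D)
    (h : 𝒮.ShT A a t u ∈ D) : A u ∈ D := by
  have h1 : 𝒮.smul (𝒮.ShT A a t u) ((t⁻¹ : ℝ) : ℍ) = A u - 𝒮.smul u ((a : ℝ) : ℍ) := by
    unfold ShT
    rw [← 𝒮.smul_mul', ← Quaternion.coe_mul, mul_inv_cancel₀ ht, Quaternion.coe_one,
      𝒮.smul_one']
  have h2 := hD.2.2 _ h ((t⁻¹ : ℝ) : ℍ)
  rw [h1] at h2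
  have h3 := hD.2.1 _ h2 _ (hD.2.2 u hu ((a : ℝ) : ℍ))
  rwa [sub_add_cancel] at h3

lemma ShT_add (hD : 𝒮.IsSubspace D) (hlin : 𝒮.RightLinearOn A D) {u v : H}
    (hu : u ∈ D) (hv : v ∈ D) :
    𝒮.ShT A a t (u + v) = 𝒮.ShT A a t u + 𝒮.ShT A a t v := by
  unfold ShT
  rw [hlin.1 u hu v hv, 𝒮.add_smul' u v,
    ← 𝒮.add_smul' (A u - 𝒮.smul u ((a : ℝ) : ℍ)) (A v - 𝒮.smul v ((a : ℝ) : ℍ))]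
  congr 1
  abel

lemma ShT_smul (hD : 𝒮.IsSubspace D) (hlin : 𝒮.RightLinearOn A D) {u : H}
    (hu : u ∈ D) (p : ℍ) :
    𝒮.ShT A a t (𝒮.smul u p) = 𝒮.smul (𝒮.ShT A a t u) p := by
  unfold ShT
  rw [hlin.2 u hu p]
  have h1 : 𝒮.smul (𝒮.smul u p) ((a : ℝ) : ℍ) = 𝒮.smul (𝒮.smul u ((a : ℝ) : ℍ)) p := by
    rw [← 𝒮.smul_mul', ← 𝒮.smul_mul', Quaternion.coe_commutes]
  rw [h1, ← 𝒮.sub_smul_q, ← 𝒮.smul_mul', ← 𝒮.smul_mul', Quaternion.coe_commutes]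

lemma ShT_symm (hsa : 𝒮.SelfAdjointUnb A D) {u v : H} (hu : u ∈ D) (hv : v ∈ D) :
    𝒮.inn (𝒮.ShT A a t u) v = 𝒮.inn u (𝒮.ShT A a t v) := by
  unfold ShT
  have hL : 𝒮.inn (𝒮.smul (A u - 𝒮.smul u ((a : ℝ) : ℍ)) ((t : ℝ) : ℍ)) v
      = (𝒮.inn u (A v) - ((a : ℝ) : ℍ) * 𝒮.inn u v) * ((t : ℝ) : ℍ) := by
    rw [𝒮.inn_smul_left', Quaternion.star_coe, 𝒮.inn_sub_left', 𝒮.inn_smul_left',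
      Quaternion.star_coe, 𝒮.symm_of_sa hsa u hu v hv, Quaternion.coe_commutes]
  have hR : 𝒮.inn u (𝒮.smul (A v - 𝒮.smul v ((a : ℝ) : ℍ)) ((t : ℝ) : ℍ))
      = (𝒮.inn u (A v) - ((a : ℝ) : ℍ) * 𝒮.inn u v) * ((t : ℝ) : ℍ) := by
    rw [𝒮.inn_smul_right, 𝒮.inn_sub_right', 𝒮.inn_smul_right,
      Quaternion.coe_commutes a (𝒮.inn u v)]
  rw [hL, hR]

lemma ShT_max (hsa : 𝒮.SelfAdjointUnb A D) (hdense : Dense D) (ht : t ≠ 0) {x z : H}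
    (h : ∀ v ∈ D, 𝒮.inn z v = 𝒮.inn x (𝒮.ShT A a t v)) :
    x ∈ D ∧ 𝒮.ShT A a t x = z := by
  have key : ∀ v ∈ D, 𝒮.inn (𝒮.smul z ((t⁻¹ : ℝ) : ℍ) + 𝒮.smul x ((a : ℝ) : ℍ)) v
      = 𝒮.inn x (A v) := by
    intro v hv
    have hh := h v hv
    unfold ShT at hh
    rw [𝒮.inn_smul_right, 𝒮.inn_sub_right', 𝒮.inn_smul_right] at hh
    rw [𝒮.inn_add_left', 𝒮.inn_smul_left', 𝒮.inn_smul_left', Quaternion.star_coe,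
      Quaternion.star_coe, hh]
    rw [Quaternion.coe_commutes, mul_assoc, ← Quaternion.coe_mul, mul_inv_cancel₀ ht,
      Quaternion.coe_one, mul_one, Quaternion.coe_commutes a (𝒮.inn x v), sub_add_cancel]
  obtain ⟨hx, hAx⟩ := 𝒮.max_of_sa hsa hdense key
  refine ⟨hx, ?_⟩
  unfold ShT
  rw [hAx, add_sub_cancel_right, ← 𝒮.smul_mul', ← Quaternion.coe_mul,
    inv_mul_cancel₀ ht, Quaternion.coe_one, 𝒮.smul_one']

end QHS

namespace QHS

variable {A : H → H} {D : Set H}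

lemma quat_eq_zero_of_re_mul {c : ℍ} (h : ∀ p : ℍ, (c * p).re = 0) : c = 0 := by
  have h1 := h (star c)
  rw [Quaternion.self_mul_star, Quaternion.re_coe] at h1
  exact Quaternion.normSq_eq_zero.mp h1

lemma inn_tendsto_left (𝒮 : QHS H) {w x : H} {z : ℕ → H}
    (hz : Filter.Tendsto z Filter.atTop (nhds x)) :
    Filter.Tendsto (fun n => 𝒮.inn (z n) w) Filter.atTop (nhds (𝒮.inn x w)) := by
  rw [tendsto_iff_norm_sub_tendsto_zero]
  have hb : ∀ n, ‖𝒮.inn (z n) w - 𝒮.inn x w‖ ≤ ‖z n - x‖ * ‖w‖ := fun n => by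
    rw [← 𝒮.inn_sub_left']; exact 𝒮.norm_inn_le _ _
  have hz0 : Filter.Tendsto (fun n => ‖z n - x‖ * ‖w‖) Filter.atTop (nhds 0) := by
    have h1 := (tendsto_iff_norm_sub_tendsto_zero.mp hz)
    simpa using h1.mul_const ‖w‖
  exact squeeze_zero (fun n => norm_nonneg _) hb hz0

set_option synthInstance.maxHeartbeats 1000000 in
set_option maxHeartbeats 1000000 in
lemma ShT_surj [CompleteSpace H] (𝒮 : QHS H) (hD : 𝒮.IsSubspace D) (hdense : Dense D)
    (hlin : 𝒮.RightLinearOn A D) (hsa : 𝒮.SelfAdjointUnb A D) (a t : ℝ) (ht : t ≠ 0)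
    (y : H) :
    ∃ v ∈ D, 𝒮.ShT A a t v ∈ D ∧ v + 𝒮.ShT A a t (𝒮.ShT A a t v) = y := by
  classical
  let G : Submodule ℝ (WithLp 2 (HAux 𝒮 × HAux 𝒮)) :=
    { carrier := {p : WithLp 2 (HAux 𝒮 × HAux 𝒮) | p.fst ∈ D ∧ p.snd = 𝒮.ShT A a t p.fst}
      add_mem' := by
        intro p q hp hq
        refine ⟨hD.2.1 _ hp.1 _ hq.1, ?_⟩
        show p.snd + q.snd = 𝒮.ShT A a t (p.fst + q.fst)
        rw [hp.2, hq.2]; exact (𝒮.ShT_add hD hlin hp.1 hq.1).symm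
      zero_mem' := by
        refine ⟨hD.1, ?_⟩
        show (0 : H) = 𝒮.ShT A a t (0 : H)
        unfold ShT
        rw [𝒮.map_zero_of_lin hD hlin, 𝒮.zero_smul_q, sub_zero, 𝒮.zero_smul_q]
      smul_mem' := by
        intro r p hp
        refine ⟨hD.2.2 _ hp.1 ((r : ℝ) : ℍ), ?_⟩
        show 𝒮.smul p.snd ((r : ℝ) : ℍ) = 𝒮.ShT A a t (𝒮.smul p.fst ((r : ℝ) : ℍ))
        rw [hp.2]; exact (𝒮.ShT_smul hD hlin hp.1 _).symm }
  have hGmem : ∀ p : WithLp 2 (HAux 𝒮 × HAux 𝒮), p ∈ G ↔ (p.fst ∈ D ∧ p.snd = 𝒮.ShT A a t p.fst) :=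
    fun p => Iff.rfl
  have hGclosed : IsClosed (G : Set (WithLp 2 (HAux 𝒮 × HAux 𝒮))) := by
    refine isClosed_of_closure_subset ?_
    intro p hp
    obtain ⟨x, hx, hlim⟩ := mem_closure_iff_seq_limit.mp hp
    have hcomp : Filter.Tendsto (fun n =>
        (WithLp.prodContinuousLinearEquiv 2 ℝ (HAux 𝒮) (HAux 𝒮)) (x n)) Filter.atTop
        (nhds ((WithLp.prodContinuousLinearEquiv 2 ℝ (HAux 𝒮) (HAux 𝒮)) p)) :=
      ((WithLp.prodContinuousLinearEquiv 2 ℝ (HAux 𝒮) (HAux 𝒮)).continuous.tendsto p).comp hlim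
    have h1 : Filter.Tendsto (fun n => (x n).fst) Filter.atTop (nhds p.fst) :=
      (continuous_fst.tendsto _).comp hcomp
    have h2 : Filter.Tendsto (fun n => (x n).snd) Filter.atTop (nhds p.snd) :=
      (continuous_snd.tendsto _).comp hcomp
    have key : ∀ w ∈ D, 𝒮.inn p.snd w = 𝒮.inn p.fst (𝒮.ShT A a t w) := by
      intro w hw
      have e1 : ∀ n, 𝒮.inn ((x n).snd) w = 𝒮.inn ((x n).fst) (𝒮.ShT A a t w) := by
        intro n
        rw [((hGmem (x n)).mp (hx n)).2]
        exact 𝒮.ShT_symm hsa ((hGmem (x n)).mp (hx n)).1 hw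
      have l1 : Filter.Tendsto (fun n => 𝒮.inn ((x n).snd) w) Filter.atTop
          (nhds (𝒮.inn p.snd w)) := 𝒮.inn_tendsto_left h2
      have l2 : Filter.Tendsto (fun n => 𝒮.inn ((x n).fst) (𝒮.ShT A a t w)) Filter.atTop
          (nhds (𝒮.inn p.fst (𝒮.ShT A a t w))) := 𝒮.inn_tendsto_left h1
      exact tendsto_nhds_unique (l1.congr e1) l2
    obtain ⟨hp1, hp2⟩ := 𝒮.ShT_max hsa hdense ht key
    exact (hGmem p).mpr ⟨hp1, hp2.symm⟩
  haveI : CompleteSpace G := hGclosed.completeSpace_coe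
  let y' : HAux 𝒮 := y
  let f : G →L[ℝ] ℝ :=
    ((innerSL ℝ y').comp ((ContinuousLinearMap.fst ℝ (HAux 𝒮) (HAux 𝒮)).comp
      (((WithLp.prodContinuousLinearEquiv 2 ℝ (HAux 𝒮) (HAux 𝒮)).toContinuousLinearMap).comp G.subtypeL)))
  let g : G := (InnerProductSpace.toDual ℝ G).symm f
  have hg : ∀ x : G, (inner ℝ g x : ℝ) = f x := fun x =>
    InnerProductSpace.toDual_symm_apply
  let v : H := (g : WithLp 2 (HAux 𝒮 × HAux 𝒮)).fst
  have hgG : (v ∈ D ∧ (g : WithLp 2 (HAux 𝒮 × HAux 𝒮)).snd = 𝒮.ShT A a t v) := g.2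
  have main : ∀ u ∈ D, ∀ p : ℍ,
      ((𝒮.inn y u - 𝒮.inn v u - 𝒮.inn (𝒮.ShT A a t v)
        (𝒮.ShT A a t u)) * p).re = 0 := by
    intro u hu p
    have hup : 𝒮.smul u p ∈ D := hD.2.2 u hu p
    let xu : WithLp 2 (HAux 𝒮 × HAux 𝒮) := (WithLp.equiv 2 (HAux 𝒮 × HAux 𝒮)).symm
      (𝒮.smul u p, 𝒮.ShT A a t (𝒮.smul u p))
    have hxu : xu ∈ G := by
      refine (hGmem xu).mpr ⟨?_, ?_⟩
      · exact hup
      · rfl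
    have h0 := hg ⟨xu, hxu⟩
    rw [Submodule.coe_inner, WithLp.prod_inner_apply] at h0
    have hfval : f ⟨xu, hxu⟩ = (𝒮.inn y (𝒮.smul u p)).re := by
      simp only [f, ContinuousLinearMap.comp_apply, Submodule.subtypeL_apply,
        ContinuousLinearEquiv.coe_coe, ContinuousLinearMap.coe_fst',
        WithLp.prodContinuousLinearEquiv_apply, innerSL_apply_apply]
      rfl
    rw [hfval] at h0
    have hc1 : (inner ℝ ((g : WithLp 2 (HAux 𝒮 × HAux 𝒮)).fst) (xu.fst) : ℝ)
        = (𝒮.inn v u * p).re := by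
      show (𝒮.inn v (𝒮.smul u p)).re = _
      rw [𝒮.inn_smul_right]
    have hc2 : (inner ℝ ((g : WithLp 2 (HAux 𝒮 × HAux 𝒮)).snd) (xu.snd) : ℝ)
        = (𝒮.inn (𝒮.ShT A a t v) (𝒮.ShT A a t u) * p).re := by
      have hx2 : xu.snd = 𝒮.smul (𝒮.ShT A a t u) p := by
        show 𝒮.ShT A a t (𝒮.smul u p) = _
        rw [𝒮.ShT_smul hD hlin hu]
      rw [hx2, hgG.2]
      show (𝒮.inn (𝒮.ShT A a t v) (𝒮.smul (𝒮.ShT A a t u) p)).re = _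
      rw [𝒮.inn_smul_right]
    change (inner ℝ ((g : WithLp 2 (HAux 𝒮 × HAux 𝒮)).fst) (xu.fst) : ℝ)
      + (inner ℝ ((g : WithLp 2 (HAux 𝒮 × HAux 𝒮)).snd) (xu.snd) : ℝ) = _ at h0
    rw [hc1, hc2] at h0
    have hy0 : (𝒮.inn y (𝒮.smul u p)).re = (𝒮.inn y u * p).re := by
      rw [𝒮.inn_smul_right]
    rw [hy0] at h0
    rw [sub_mul, sub_mul, Quaternion.re_sub, Quaternion.re_sub]
    linarith
  have main2 : ∀ u ∈ D, 𝒮.inn (y - v) u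
      = 𝒮.inn (𝒮.ShT A a t v) (𝒮.ShT A a t u) := by
    intro u hu
    have hz := quat_eq_zero_of_re_mul (main u hu)
    rw [𝒮.inn_sub_left']
    exact sub_eq_zero.mp hz
  obtain ⟨hTvD, hTTv⟩ := 𝒮.ShT_max hsa hdense ht main2
  refine ⟨v, hgG.1, hTvD, ?_⟩
  rw [hTTv]
  abel

end QHS

namespace QHS

variable {A : H → H} {D : Set H} {a t : ℝ}

lemma ShT_one (𝒮 : QHS H) (u : H) :
    𝒮.ShT A a 1 u = A u - 𝒮.smul u ((a : ℝ) : ℍ) := by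
  unfold ShT
  rw [Quaternion.coe_one, 𝒮.smul_one']

lemma ShT_scale (𝒮 : QHS H) (u : H) :
    𝒮.ShT A a t u = 𝒮.smul (𝒮.ShT A a 1 u) ((t : ℝ) : ℍ) := by
  rw [𝒮.ShT_one]
  rfl

lemma surj_eps [CompleteSpace H] (𝒮 : QHS H) (hD : 𝒮.IsSubspace D) (hdense : Dense D)
    (hlin : 𝒮.RightLinearOn A D) (hsa : 𝒮.SelfAdjointUnb A D) (a : ℝ) {ε : ℝ}
    (hε : 0 < ε) (z : H) :
    ∃ v ∈ D, A v ∈ D ∧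
      𝒮.smul v ((ε : ℝ) : ℍ) + 𝒮.ShT A a 1 (𝒮.ShT A a 1 v) = 𝒮.smul z ((ε : ℝ) : ℍ) := by
  have hst : Real.sqrt ε ≠ 0 := ne_of_gt (Real.sqrt_pos.mpr hε)
  have ht : (Real.sqrt ε)⁻¹ ≠ 0 := inv_ne_zero hst
  obtain ⟨v, hv, hTv, heq⟩ := 𝒮.ShT_surj hD hdense hlin hsa a (Real.sqrt ε)⁻¹ ht z
  have hAv : A v ∈ D := 𝒮.mem_of_ShT_mem hD ht hv hTv
  have hSh1 : 𝒮.ShT A a 1 v ∈ D := 𝒮.ShT_mem hD hv hAv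
  have hrw : 𝒮.ShT A a (Real.sqrt ε)⁻¹ (𝒮.ShT A a (Real.sqrt ε)⁻¹ v)
      = 𝒮.smul (𝒮.ShT A a 1 (𝒮.ShT A a 1 v))
        ((((Real.sqrt ε)⁻¹ * (Real.sqrt ε)⁻¹ : ℝ)) : ℍ) := by
    rw [𝒮.ShT_scale (𝒮.ShT A a (Real.sqrt ε)⁻¹ v), 𝒮.ShT_scale v,
      𝒮.ShT_smul hD hlin hSh1, ← 𝒮.smul_mul', ← Quaternion.coe_mul]
  rw [hrw] at heq
  have hmul := congrArg (fun w => 𝒮.smul w ((ε : ℝ) : ℍ)) heq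
  rw [𝒮.add_smul', ← 𝒮.smul_mul', ← Quaternion.coe_mul] at hmul
  have htt : (Real.sqrt ε)⁻¹ * (Real.sqrt ε)⁻¹ * ε = 1 := by
    have h1 : Real.sqrt ε * Real.sqrt ε = ε := Real.mul_self_sqrt hε.le
    rw [← mul_inv, h1, inv_mul_cancel₀ (ne_of_gt hε)]
  rw [htt, Quaternion.coe_one, 𝒮.smul_one'] at hmul
  exact ⟨v, hv, hAv, hmul⟩

lemma Delta_eq (𝒮 : QHS H) (hD : 𝒮.IsSubspace D) (hlin : 𝒮.RightLinearOn A D) (q : ℍ)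
    {u : H} (hu : u ∈ D) (hAu : A u ∈ D) :
    𝒮.Delta A q u = 𝒮.ShT A q.re 1 (𝒮.ShT A q.re 1 u)
      + 𝒮.smul u ((‖q‖ ^ 2 - q.re ^ 2 : ℝ) : ℍ) := by
  have haD : 𝒮.smul u ((q.re : ℝ) : ℍ) ∈ D := hD.2.2 u hu _
  rw [𝒮.ShT_one, 𝒮.ShT_one, 𝒮.map_sub_of_lin hD hlin hAu haD, hlin.2 u hu,
    𝒮.sub_smul_q (A u) (𝒮.smul u ((q.re : ℝ) : ℍ)) ((q.re : ℝ) : ℍ),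
    ← 𝒮.smul_mul' u ((q.re : ℝ) : ℍ) ((q.re : ℝ) : ℍ), ← Quaternion.coe_mul,
    ← pow_two q.re]
  unfold Delta
  have h2 : ((2 * q.re : ℝ)) = q.re + q.re := by ring
  rw [h2, Quaternion.coe_add, 𝒮.smul_add' (A u)]
  have hsplit : ((‖q‖ ^ 2 : ℝ)) = q.re ^ 2 + (‖q‖ ^ 2 - q.re ^ 2) := by ring
  rw [hsplit, Quaternion.coe_add, 𝒮.smul_add' u]
  abel

lemma inn_Delta_re (𝒮 : QHS H) (hD : 𝒮.IsSubspace D) (hlin : 𝒮.RightLinearOn A D)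
    (hsa : 𝒮.SelfAdjointUnb A D) (q : ℍ) {u : H} (hu : u ∈ D) (hAu : A u ∈ D) :
    (𝒮.inn u (𝒮.Delta A q u)).re
      = ‖𝒮.ShT A q.re 1 u‖ ^ 2 + (‖q‖ ^ 2 - q.re ^ 2) * ‖u‖ ^ 2 := by
  have hShu : 𝒮.ShT A q.re 1 u ∈ D := 𝒮.ShT_mem hD hu hAu
  rw [𝒮.Delta_eq hD hlin q hu hAu, 𝒮.inn_add_right, Quaternion.re_add]
  congr 1
  · rw [← 𝒮.ShT_symm hsa hu hShu, ← 𝒮.norm_sq']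
  · rw [𝒮.inn_smul_right, Quaternion.mul_coe_eq_smul, Quaternion.re_smul, ← 𝒮.norm_sq',
      smul_eq_mul]

lemma coercive (𝒮 : QHS H) (hpos : 𝒮.PositiveOn A D) (ha : a ≤ 0) {u : H} (hu : u ∈ D) :
    a ^ 2 * ‖u‖ ^ 2 ≤ ‖𝒮.ShT A a 1 u‖ ^ 2 := by
  have h1 : (𝒮.inn u (𝒮.ShT A a 1 u)).re = (𝒮.inn u (A u)).re - a * ‖u‖ ^ 2 := by
    rw [𝒮.ShT_one, 𝒮.inn_sub_right', Quaternion.re_sub, 𝒮.inn_smul_right,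
      Quaternion.mul_coe_eq_smul, Quaternion.re_smul, ← 𝒮.norm_sq', smul_eq_mul]
  have h2 : 0 ≤ (𝒮.inn u (A u)).re := (hpos u hu).2
  have h3 : (𝒮.inn u (𝒮.ShT A a 1 u)).re ≤ ‖u‖ * ‖𝒮.ShT A a 1 u‖ := 𝒮.re_inn_le _ _
  by_cases h0 : ‖u‖ = 0
  · rw [h0]
    simp only [ne_eq, OfNat.ofNat_ne_zero, not_false_eq_true, zero_pow, mul_zero]
    positivity
  · have hu0 : 0 < ‖u‖ := lt_of_le_of_ne (norm_nonneg u) (Ne.symm h0)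
    have h4 : -a * ‖u‖ ≤ ‖𝒮.ShT A a 1 u‖ := by nlinarith
    nlinarith [norm_nonneg (𝒮.ShT A a 1 u)]

end QHS

end Dev

set_option maxHeartbeats 1000000

/-- Every positive self-adjoint densely defined operator on a
quaternionic Hilbert space has spherical spectrum contained in `[0, +∞)`. -/
theorem positive_selfadjoint_spherical_spectrum_nonneg
    {H : Type} [NormedAddCommGroup H] [CompleteSpace H] (𝒮 : QHS H)
    (A : H → H) (D : Set H)
    (hD : 𝒮.IsSubspace D) (hdense : Dense D) (hlin : 𝒮.RightLinearOn A D)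
    (hsa : 𝒮.SelfAdjointUnb A D) (hpos : 𝒮.PositiveOn A D) :
    ∀ q ∈ 𝒮.sphSpectrum A D, ∃ r : ℝ, 0 ≤ r ∧ q = ((r : ℝ) : ℍ) := by
  intro q hq
  by_contra hcon
  push_neg at hcon
  have hnormsq : ‖q‖ ^ 2 = q.re ^ 2 + (q.imI ^ 2 + q.imJ ^ 2 + q.imK ^ 2) := by
    rw [sq, ← Quaternion.normSq_eq_norm_mul_self, Quaternion.normSq_def']
    ring
  have hb2nn : 0 ≤ ‖q‖ ^ 2 - q.re ^ 2 := by
    rw [hnormsq]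
    nlinarith [sq_nonneg q.imI, sq_nonneg q.imJ, sq_nonneg q.imK]
  -- the uniform lower bound `δ`
  have hmain : ∃ δ : ℝ, 0 < δ ∧
      (∀ u ∈ D2 A D, δ * ‖u‖ ^ 2 ≤ (𝒮.inn u (𝒮.Delta A q u)).re) ∧
      Dense (𝒮.Delta A q '' D2 A D) := by
    rcases eq_or_lt_of_le hb2nn with hb0 | hbpos
    · -- `q` is a real number, necessarily negative
      have him : q.imI ^ 2 + q.imJ ^ 2 + q.imK ^ 2 = 0 := by
        rw [hnormsq] at hb0
        nlinarith [sq_nonneg q.imI, sq_nonneg q.imJ, sq_nonneg q.imK]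
      have hqreal : q = ((q.re : ℝ) : ℍ) := by
        have h1 : q.imI = 0 := by nlinarith [sq_nonneg q.imI, sq_nonneg q.imJ, sq_nonneg q.imK]
        have h2 : q.imJ = 0 := by nlinarith [sq_nonneg q.imI, sq_nonneg q.imJ, sq_nonneg q.imK]
        have h3 : q.imK = 0 := by nlinarith [sq_nonneg q.imI, sq_nonneg q.imJ, sq_nonneg q.imK]
        ext <;> simp [h1, h2, h3]
      have hneg : q.re < 0 := by
        by_contra hge
        push_neg at hge
        exact hcon q.re hge hqreal
      have ha2 : 0 < q.re ^ 2 := by nlinarith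
      refine ⟨q.re ^ 2, ha2, ?_, ?_⟩
      · intro u hu
        rw [𝒮.inn_Delta_re hD hlin hsa q hu.1 hu.2, ← hb0]
        have := 𝒮.coercive hpos (le_of_lt hneg) hu.1
        linarith
      · -- density by approximation
        rw [Metric.dense_iff]
        intro z r hr
        set ε : ℝ := (r * q.re ^ 2) / (2 * (‖z‖ + 1)) with hε
        have hεpos : 0 < ε := by
          apply div_pos
          · nlinarith
          · nlinarith [norm_nonneg z]
        obtain ⟨v, hv, hAv, heq⟩ := 𝒮.surj_eps hD hdense hlin hsa q.re hεpos
          (𝒮.smul z ((ε⁻¹ : ℝ) : ℍ))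
        rw [← 𝒮.smul_mul', ← Quaternion.coe_mul, inv_mul_cancel₀ (ne_of_gt hεpos),
          Quaternion.coe_one, 𝒮.smul_one'] at heq
        have hΔ : 𝒮.Delta A q v = z - 𝒮.smul v ((ε : ℝ) : ℍ) := by
          rw [𝒮.Delta_eq hD hlin q hv hAv, ← hb0, Quaternion.coe_zero, 𝒮.smul_zero_q,
            add_zero]
          have := heq
          rw [← this]
          abel
        have hb1 : q.re ^ 2 * ‖v‖ ^ 2 ≤ ‖𝒮.ShT A q.re 1 v‖ ^ 2 :=
          𝒮.coercive hpos (le_of_lt hneg) hv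
        have hb2' : ‖𝒮.ShT A q.re 1 v‖ ^ 2 = (𝒮.inn v (𝒮.Delta A q v)).re := by
          rw [𝒮.inn_Delta_re hD hlin hsa q hv hAv, ← hb0]
          ring
        have hb3 : (𝒮.inn v (𝒮.Delta A q v)).re = (𝒮.inn v z).re - ε * ‖v‖ ^ 2 := by
          rw [hΔ, 𝒮.inn_sub_right', Quaternion.re_sub, 𝒮.inn_smul_right,
            Quaternion.mul_coe_eq_smul, Quaternion.re_smul, ← 𝒮.norm_sq', smul_eq_mul]
        have hb4 : (𝒮.inn v z).re ≤ ‖v‖ * ‖z‖ := 𝒮.re_inn_le _ _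
        have hvb : ‖v‖ ≤ ‖z‖ / q.re ^ 2 := by
          by_cases h0 : ‖v‖ = 0
          · rw [h0]
            positivity
          · have hv0 : 0 < ‖v‖ := lt_of_le_of_ne (norm_nonneg v) (Ne.symm h0)
            rw [le_div_iff₀ ha2]
            nlinarith
        refine ⟨𝒮.Delta A q v, ?_, ⟨v, ⟨hv, hAv⟩, rfl⟩⟩
        rw [Metric.mem_ball, dist_eq_norm, hΔ]
        have hnorm : ‖z - 𝒮.smul v ((ε : ℝ) : ℍ) - z‖ = ‖v‖ * ε := by
          have : z - 𝒮.smul v ((ε : ℝ) : ℍ) - z = -(𝒮.smul v ((ε : ℝ) : ℍ)) := by abel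
          rw [this, norm_neg, 𝒮.norm_smul_q, Quaternion.norm_coe,
            Real.norm_of_nonneg hεpos.le]
        rw [hnorm]
        have hzb : ‖v‖ * ε ≤ (‖z‖ / q.re ^ 2) * ε :=
          mul_le_mul_of_nonneg_right hvb hεpos.le
        have hfin : (‖z‖ / q.re ^ 2) * ε < r := by
          rw [hε]
          rw [div_mul_div_comm]
          rw [div_lt_iff₀ (by nlinarith [norm_nonneg z] : 0 < q.re ^ 2 * (2 * (‖z‖ + 1)))]
          nlinarith [mul_pos hr ha2, mul_nonneg (mul_pos hr ha2).le (norm_nonneg z)]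
        linarith
    · -- `q` is not real: `Δ_q` is surjective
      refine ⟨‖q‖ ^ 2 - q.re ^ 2, hbpos, ?_, ?_⟩
      · intro u hu
        rw [𝒮.inn_Delta_re hD hlin hsa q hu.1 hu.2]
        nlinarith [sq_nonneg ‖𝒮.ShT A q.re 1 u‖]
      · have hsurj : ∀ z : H, ∃ u ∈ D2 A D, 𝒮.Delta A q u = z := by
          intro z
          obtain ⟨v, hv, hAv, heq⟩ := 𝒮.surj_eps hD hdense hlin hsa q.re hbpos
            (𝒮.smul z (((‖q‖ ^ 2 - q.re ^ 2)⁻¹ : ℝ) : ℍ))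
          rw [← 𝒮.smul_mul', ← Quaternion.coe_mul, inv_mul_cancel₀ (ne_of_gt hbpos),
            Quaternion.coe_one, 𝒮.smul_one'] at heq
          refine ⟨v, ⟨hv, hAv⟩, ?_⟩
          rw [𝒮.Delta_eq hD hlin q hv hAv, ← heq]
          abel
        have himg : 𝒮.Delta A q '' D2 A D = Set.univ := by
          apply Set.eq_univ_of_forall
          intro z
          obtain ⟨u, hu, he⟩ := hsurj z
          exact ⟨u, hu, he⟩
        rw [himg]
        exact dense_univ
  obtain ⟨δ, hδ, hlow, hdens⟩ := hmain
  apply hq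
  refine ⟨?_, hdens, ⟨δ⁻¹, ?_⟩⟩
  · intro u hu h0
    have h1 := hlow u hu
    rw [h0, 𝒮.inn_zero_right'] at h1
    simp only [Quaternion.re_zero] at h1
    have : ‖u‖ ^ 2 ≤ 0 := by nlinarith
    have h2 : ‖u‖ = 0 := by nlinarith [sq_nonneg ‖u‖, norm_nonneg u]
    exact norm_eq_zero.mp h2
  · intro u hu
    have h1 := hlow u hu
    have h2 : (𝒮.inn u (𝒮.Delta A q u)).re ≤ ‖u‖ * ‖𝒮.Delta A q u‖ := 𝒮.re_inn_le _ _
    by_cases h0 : ‖u‖ = 0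
    · rw [h0]
      positivity
    · have hu0 : 0 < ‖u‖ := lt_of_le_of_ne (norm_nonneg u) (Ne.symm h0)
      have h3 : δ * ‖u‖ ≤ ‖𝒮.Delta A q u‖ := by nlinarith
      calc ‖u‖ = δ⁻¹ * (δ * ‖u‖) := by
            rw [← mul_assoc, inv_mul_cancel₀ (ne_of_gt hδ), one_mul]
        _ ≤ δ⁻¹ * ‖𝒮.Delta A q u‖ :=
            mul_le_mul_of_nonneg_left h3 (inv_nonneg.mpr hδ.le)
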